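/- Let m ≥ 2 be an integer, ζ ∈ [0,1), and let real numbers p_{i,k} for i ∈ {1,…,m−1} and k ≥ 1 satisfy Σ_{i=1}^{m−1} |p_{i,k}| ≤ ζ for every k ≥ 1. Let (κ_k)_{k≥1} be real numbers and let (e_k)_{k ≥ 2−m} be real numbers satisfying e_k = Σ_{i=1}^{m−1} p_{i,k}·e_{k−i} + κ_k for every k ≥ 1. Then: (i) if sup_{k≥1} |κ_k| < ∞ then sup_k |e_k| < ∞; and (ii) if κ_k → 0 as k → ∞ then e_k → 0 as k → ∞. -/

import Mathlib

open Filter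

/-- Lemma 4 of the paper: boundedness and convergence of the higher-order scalar
tracking-error recursion `e_k = Σ_{i=1}^{m−1} p_{i,k} e_{k−i} + κ_k` when
`Σ_{i=1}^{m−1} |p_{i,k}| ≤ ζ < 1`. -/
theorem stmt9 (m : ℕ) (hm : 2 ≤ m) (ζ : ℝ) (hζ0 : 0 ≤ ζ) (hζ1 : ζ < 1)
    (p : ℕ → ℕ → ℝ)
    (hp : ∀ k : ℕ, 1 ≤ k → ∑ i ∈ Finset.Icc 1 (m - 1), |p i k| ≤ ζ)
    (κ : ℕ → ℝ) (e : ℤ → ℝ)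
    (hrec : ∀ k : ℕ, 1 ≤ k →
      e k = ∑ i ∈ Finset.Icc 1 (m - 1), p i k * e ((k : ℤ) - (i : ℤ)) + κ k) :
    ((∃ B, ∀ k, 1 ≤ k → |κ k| ≤ B) →
      ∃ B', ∀ k : ℤ, 2 - (m : ℤ) ≤ k → |e k| ≤ B') ∧
    (Tendsto κ atTop (nhds 0) → Tendsto (fun k : ℕ => e (k : ℤ)) atTop (nhds 0)) := by
  have h1m : (1 : ℕ) ∈ Finset.Icc 1 (m - 1) := by
    simp only [Finset.mem_Icc]; omega
  -- key one-step estimate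
  have hstep : ∀ (k : ℕ), 1 ≤ k → ∀ D : ℝ,
      (∀ i ∈ Finset.Icc 1 (m - 1), |e ((k : ℤ) - (i : ℤ))| ≤ D) →
      |e k| ≤ ζ * D + |κ k| := by
    intro k hk D hD
    have hDnn : 0 ≤ D := le_trans (abs_nonneg _) (hD 1 h1m)
    rw [hrec k hk]
    calc |∑ i ∈ Finset.Icc 1 (m - 1), p i k * e ((k : ℤ) - (i : ℤ)) + κ k|
        ≤ |∑ i ∈ Finset.Icc 1 (m - 1), p i k * e ((k : ℤ) - (i : ℤ))| + |κ k| :=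
          abs_add_le _ _
      _ ≤ (∑ i ∈ Finset.Icc 1 (m - 1), |p i k * e ((k : ℤ) - (i : ℤ))|) + |κ k| :=
          add_le_add_left (Finset.abs_sum_le_sum_abs _ _) _
      _ ≤ (∑ i ∈ Finset.Icc 1 (m - 1), |p i k| * D) + |κ k| := by
          refine add_le_add_left (Finset.sum_le_sum fun i hi => ?_) _
          rw [abs_mul]
          exact mul_le_mul_of_nonneg_left (hD i hi) (abs_nonneg _)
      _ = (∑ i ∈ Finset.Icc 1 (m - 1), |p i k|) * D + |κ k| := by
          rw [Finset.sum_mul]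
      _ ≤ ζ * D + |κ k| :=
          add_le_add_left (mul_le_mul_of_nonneg_right (hp k hk) hDnn) _
  -- boundedness part
  have hne : (Finset.Icc (2 - (m : ℤ)) 0).Nonempty := by
    refine ⟨0, ?_⟩; simp only [Finset.mem_Icc]; omega
  have hbd : ∀ B : ℝ, 0 ≤ B → (∀ k, 1 ≤ k → |κ k| ≤ B) →
      ∀ k : ℤ, 2 - (m : ℤ) ≤ k →
      |e k| ≤ max ((Finset.Icc (2 - (m : ℤ)) 0).sup' hne fun j => |e j|) (B / (1 - ζ)) := by
    intro B hB hκB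
    set C := max ((Finset.Icc (2 - (m : ℤ)) 0).sup' hne fun j => |e j|) (B / (1 - ζ)) with hC
    have hinit : ∀ k : ℤ, 2 - (m : ℤ) ≤ k → k ≤ 0 → |e k| ≤ C := by
      intro k h1 h2
      exact le_trans (Finset.le_sup' (fun j => |e j|) (Finset.mem_Icc.mpr ⟨h1, h2⟩))
        (le_max_left _ _)
    have hBC : B ≤ (1 - ζ) * C := by
      have h1 : B / (1 - ζ) ≤ C := le_max_right _ _
      have h2 : 0 < 1 - ζ := by linarith
      calc B = (1 - ζ) * (B / (1 - ζ)) := by field_simp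
        _ ≤ (1 - ζ) * C := by
            exact mul_le_mul_of_nonneg_left h1 h2.le
    have main : ∀ n : ℕ, ∀ k : ℤ, 2 - (m : ℤ) ≤ k → k ≤ (n : ℤ) → |e k| ≤ C := by
      intro n
      induction n with
      | zero => intro k h1 h2; exact hinit k h1 (by exact_mod_cast h2)
      | succ n ih =>
        intro k h1 h2
        rcases le_or_gt k n with h | h
        · exact ih k h1 h
        · have hk : k = ((n + 1 : ℕ) : ℤ) := by push_cast; push_cast at h2; omega
          subst hk
          have hs := hstep (n + 1) (by omega) C ?_
          · calc |e ((n + 1 : ℕ) : ℤ)| ≤ ζ * C + |κ (n + 1)| := hs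
              _ ≤ ζ * C + B := by linarith [hκB (n + 1) (by omega)]
              _ ≤ ζ * C + (1 - ζ) * C := by linarith
              _ = C := by ring
          · intro i hi
            simp only [Finset.mem_Icc] at hi
            refine ih _ (by push_cast; omega) (by push_cast; omega)
    intro k hk
    exact main k.toNat k hk (by omega)
  constructor
  · rintro ⟨B, hB⟩
    have hB0 : 0 ≤ max B 0 := le_max_right _ _
    exact ⟨_, hbd (max B 0) hB0 (fun k hk => le_trans (hB k hk) (le_max_left _ _))⟩
  · intro hκ
    -- κ is bounded
    obtain ⟨N, hN⟩ := (Metric.tendsto_atTop.mp hκ 1 one_pos)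
    set Bκ : ℝ := max 1 ((Finset.range (N + 1)).sup' (by simp) fun k => |κ k|) with hBκ
    have hBκnn : 0 ≤ Bκ := le_trans zero_le_one (le_max_left _ _)
    have hκB : ∀ k, 1 ≤ k → |κ k| ≤ Bκ := by
      intro k hk
      rcases le_or_gt k N with h | h
      · exact le_trans (Finset.le_sup' (fun k => |κ k|)
          (Finset.mem_range.mpr (by omega))) (le_max_right _ _)
      · have := hN k (by omega)
        rw [Real.dist_eq, sub_zero] at this
        exact le_trans this.le (le_max_left _ _)
    set C := max ((Finset.Icc (2 - (m : ℤ)) 0).sup' hne fun j => |e j|) (Bκ / (1 - ζ)) with hC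
    have heC : ∀ k : ℤ, 2 - (m : ℤ) ≤ k → |e k| ≤ C := hbd Bκ hBκnn hκB
    have hCnn : 0 ≤ C := le_trans (abs_nonneg _) (heC 0 (by omega))
    have h1ζ : 0 < 1 - ζ := by linarith
    -- improvement step
    have improve : ∀ ε : ℝ, 0 < ε → ∀ D : ℝ,
        (∃ N : ℕ, ∀ k : ℕ, N ≤ k → |e (k : ℤ)| ≤ D) →
        ∃ N' : ℕ, ∀ k : ℕ, N' ≤ k → |e (k : ℤ)| ≤ ζ * D + ε := by
      intro ε hε D ⟨M, hM⟩
      obtain ⟨Nε, hNε⟩ := (Metric.tendsto_atTop.mp hκ ε hε)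
      refine ⟨M + m + Nε, fun k hk => ?_⟩
      have hk1 : 1 ≤ k := by omega
      have hs := hstep k hk1 D ?_
      · have hκε : |κ k| ≤ ε := by
          have := hNε k (by omega)
          rw [Real.dist_eq, sub_zero] at this
          exact this.le
        linarith
      · intro i hi
        simp only [Finset.mem_Icc] at hi
        have : (k : ℤ) - (i : ℤ) = ((k - i : ℕ) : ℤ) := by omega
        rw [this]
        exact hM (k - i) (by omega)
    -- iterate: ∀ n, eventually |e k| ≤ ζ^n * C + ε/(1-ζ)
    have iter : ∀ ε : ℝ, 0 < ε → ∀ n : ℕ,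
        ∃ N : ℕ, ∀ k : ℕ, N ≤ k → |e (k : ℤ)| ≤ ζ ^ n * C + ε / (1 - ζ) := by
      intro ε hε n
      induction n with
      | zero =>
        refine ⟨0, fun k _ => ?_⟩
        have := heC k (by omega)
        have hεpos : 0 ≤ ε / (1 - ζ) := le_of_lt (div_pos hε h1ζ)
        simpa using by linarith
      | succ n ih =>
        obtain ⟨N', hN'⟩ := improve ε hε _ ih
        refine ⟨N', fun k hk => ?_⟩
        have := hN' k hk
        have heq : ζ * (ζ ^ n * C + ε / (1 - ζ)) + ε = ζ ^ (n + 1) * C + ε / (1 - ζ) := by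
          field_simp
          ring
        linarith
    rw [Metric.tendsto_atTop]
    intro ε hε
    have hε4 : 0 < ε * (1 - ζ) / 4 := by positivity
    -- find n with ζ^n * C < ε/2
    have htend : Tendsto (fun n : ℕ => ζ ^ n * C) atTop (nhds 0) := by
      simpa using (tendsto_pow_atTop_nhds_zero_of_lt_one hζ0 hζ1).mul_const C
    obtain ⟨n0, hn0⟩ := Metric.tendsto_atTop.mp htend (ε / 2) (by linarith)
    have hnval : ζ ^ n0 * C < ε / 2 := by
      have := hn0 n0 le_rfl
      rw [Real.dist_eq, sub_zero] at this
      calc ζ ^ n0 * C ≤ |ζ ^ n0 * C| := le_abs_self _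
        _ < ε / 2 := this
    obtain ⟨N, hN⟩ := iter (ε * (1 - ζ) / 4) hε4 n0
    refine ⟨N, fun k hk => ?_⟩
    rw [Real.dist_eq, sub_zero]
    have h1 := hN k hk
    have h2 : ε * (1 - ζ) / 4 / (1 - ζ) = ε / 4 := by field_simp
    calc |e (k : ℤ)| ≤ ζ ^ n0 * C + ε * (1 - ζ) / 4 / (1 - ζ) := h1
      _ = ζ ^ n0 * C + ε / 4 := by rw [h2]
      _ < ε / 2 + ε / 4 := by linarith
      _ < ε := by linarith
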